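/- Let h and g be analytic functions on the unit disk 𝔻 with h(0) = 0 and g(0) = 0, and suppose the harmonic mapping f(z) = h(z) + conj(g(z)) satisfies |f(z)| < 1 for all z ∈ 𝔻. Then |h(z)| + |g(z)| ≤ 1 for all z ∈ 𝔻 with |z| ≤ tanh(π/4). -/

import Mathlib

open Metric Real Complex


private lemma sinh_convex_aux {u P : ℝ} (h0 : 0 ≤ u) (huP : u ≤ P) (hP : 0 < P) :
    Real.sinh u * P ≤ Real.sinh P * u := by
  have hconv : ConvexOn ℝ (Set.Ici (0:ℝ)) Real.sinh := by
    apply convexOn_of_deriv2_nonneg (convex_Ici 0)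
    · exact Real.continuous_sinh.continuousOn
    · exact Real.differentiable_sinh.differentiableOn
    · rw [Real.deriv_sinh]; exact Real.differentiable_cosh.differentiableOn
    · intro x hx
      simp only [Function.iterate_succ, Function.iterate_zero, Function.comp_apply, id_eq]
      rw [Real.deriv_sinh, Real.deriv_cosh]
      rw [interior_Ici] at hx
      exact Real.sinh_nonneg_iff.mpr hx.le
  have ha : (0:ℝ) ≤ 1 - u/P := by
    have : u/P ≤ 1 := (div_le_one hP).mpr huP
    linarith
  have hb : (0:ℝ) ≤ u/P := by positivity
  have h1 := hconv.2 (Set.self_mem_Ici : (0:ℝ) ∈ Set.Ici 0) (Set.mem_Ici.mpr hP.le) ha hb (by ring)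
  simp only [smul_eq_mul, mul_zero, zero_add, Real.sinh_zero] at h1
  have he : u / P * P = u := by field_simp
  rw [he] at h1
  have := mul_le_mul_of_nonneg_right h1 hP.le
  calc Real.sinh u * P ≤ (u/P * Real.sinh P) * P := this
    _ = Real.sinh P * u := by field_simp

private lemma cosP_le {θ : ℝ} (h0 : 0 ≤ θ) (hθ : θ ≤ π/2) :
    Real.cosh (π/2) * Real.cos θ ≤ Real.cosh (Real.sqrt ((π/2)^2 - θ^2)) := by
  have hPpos : (0:ℝ) < π/2 := by positivity
  set P : ℝ := π/2 with hPdef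
  set ψ : ℝ → ℝ := fun t => Real.cosh (Real.sqrt (P^2 - t^2)) - Real.cosh P * Real.cos t with hψ
  have key : MonotoneOn ψ (Set.Icc 0 P) := by
    apply monotoneOn_of_deriv_nonneg (convex_Icc 0 P)
    · apply ContinuousOn.sub
      · exact (Real.continuous_cosh.comp (Real.continuous_sqrt.comp
          (by continuity))).continuousOn
      · exact (continuous_const.mul Real.continuous_cos).continuousOn
    · rw [interior_Icc]
      intro t ht
      have hpos : 0 < P^2 - t^2 := by nlinarith [ht.1, ht.2]
      have h1 : HasDerivAt (fun t : ℝ => P^2 - t^2) (-(2*t)) t := by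
        simpa using (hasDerivAt_pow 2 t).const_sub (P^2)
      have h2 := (h1.sqrt hpos.ne').cosh
      exact ((h2.sub ((Real.hasDerivAt_cos t).const_mul (Real.cosh P))).differentiableAt).differentiableWithinAt
    · rw [interior_Icc]
      intro t ht
      have hpos : 0 < P^2 - t^2 := by nlinarith [ht.1, ht.2]
      set s := Real.sqrt (P^2 - t^2) with hs
      have hspos : 0 < s := Real.sqrt_pos.mpr hpos
      have hssq : s^2 = P^2 - t^2 := Real.sq_sqrt hpos.le
      have hsP : s ≤ P := by nlinarith [ht.1]
      have h1 : HasDerivAt (fun t : ℝ => P^2 - t^2) (-(2*t)) t := by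
        simpa using (hasDerivAt_pow 2 t).const_sub (P^2)
      have h2 := (h1.sqrt hpos.ne').cosh
      have h3 := h2.sub ((Real.hasDerivAt_cos t).const_mul (Real.cosh P))
      rw [show deriv ψ t = _ from h3.deriv]
      have hsin : t / P ≤ Real.sin t := by
        have := Real.mul_le_sin (x := t) ht.1.le (by rw [hPdef] at ht; linarith [ht.2])
        calc t / P = 2/π * t := by rw [hPdef]; field_simp
          _ ≤ Real.sin t := this
      have hsinh : Real.sinh s * t / s ≤ Real.sinh P * t / P := by
        have h4 := sinh_convex_aux hspos.le hsP hPpos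
        rw [div_le_div_iff₀ hspos hPpos]
        nlinarith [ht.1]
      have hcs : Real.sinh P ≤ Real.cosh P := by
        nlinarith [Real.cosh_sub_sinh P, Real.exp_pos (-P)]
      have : Real.sinh s * (-(2*t) / (2*s)) = -(Real.sinh s * t / s) := by
        field_simp
      rw [this]
      have hfin : Real.sinh s * t / s ≤ Real.cosh P * Real.sin t := by
        calc Real.sinh s * t / s ≤ Real.sinh P * t / P := hsinh
          _ ≤ Real.cosh P * (t/P) := by
              rw [mul_div_assoc]
              exact mul_le_mul_of_nonneg_right hcs (div_nonneg ht.1.le hPpos.le)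
          _ ≤ Real.cosh P * Real.sin t :=
              mul_le_mul_of_nonneg_left hsin (Real.cosh_pos P).le
      simp only [mul_neg]
      linarith
  have h1 := key (Set.mem_Icc.mpr ⟨le_refl 0, hPpos.le⟩) (Set.mem_Icc.mpr ⟨h0, hθ⟩) h0
  have hψ0 : ψ 0 = 0 := by
    simp only [hψ]
    rw [zero_pow (by norm_num), sub_zero, Real.sqrt_sq hPpos.le, Real.cos_zero, mul_one, sub_self]
  rw [hψ0] at h1
  simp only [hψ] at h1
  linarith

private lemma lemB {X Y : ℝ} (hX : |X| < π/2)
    (h : Real.cosh Y ≤ Real.cosh (π/2) * Real.cos X) : X^2 + Y^2 ≤ (π/2)^2 := by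
  have hPpos : (0:ℝ) < π/2 := by positivity
  have h0 : Real.cosh Y ≤ Real.cosh (π/2) * Real.cos |X| := by rwa [Real.cos_abs]
  have hA := cosP_le (abs_nonneg X) hX.le
  have h2 : Real.cosh Y ≤ Real.cosh (Real.sqrt ((π/2)^2 - |X|^2)) := le_trans h0 hA
  have h3 : |Y| ≤ |Real.sqrt ((π/2)^2 - |X|^2)| := Real.cosh_le_cosh.mp h2
  have hnn : (0:ℝ) ≤ (π/2)^2 - |X|^2 := by nlinarith [abs_nonneg X]
  rw [_root_.abs_of_nonneg (Real.sqrt_nonneg _)] at h3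
  have h4 : Y^2 ≤ (π/2)^2 - |X|^2 := by
    have := Real.sq_sqrt hnn
    nlinarith [abs_nonneg Y, _root_.sq_abs Y]
  nlinarith [_root_.sq_abs X]

set_option maxHeartbeats 1000000 in
open Metric in
theorem harmonic_bohr_tanh_radius
    (h g : ℂ → ℂ)
    (hh : AnalyticOnNhd ℂ h (ball (0 : ℂ) 1))
    (hg : AnalyticOnNhd ℂ g (ball (0 : ℂ) 1))
    (hh0 : h 0 = 0) (hg0 : g 0 = 0)
    (hbound : ∀ z : ℂ, ‖z‖ < 1 → ‖h z + (starRingEnd ℂ) (g z)‖ < 1) :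
    ∀ z : ℂ, ‖z‖ ≤ Real.tanh (Real.pi / 4) → ‖h z‖ + ‖g z‖ ≤ 1 := by
  intro z hz
  set r : ℝ := Real.tanh (π/4) with hrdef
  -- basic facts about r
  have hch : Real.cosh (π/4) > 0 := Real.cosh_pos _
  have hsh : (0:ℝ) ≤ Real.sinh (π/4) := Real.sinh_nonneg_iff.mpr (by positivity)
  have hcs : Real.sinh (π/4) < Real.cosh (π/4) := by
    nlinarith [Real.cosh_sub_sinh (π/4), Real.exp_pos (-(π/4))]
  have hr0 : 0 ≤ r := by
    rw [hrdef, Real.tanh_eq_sinh_div_cosh]; positivity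
  have hr1 : r < 1 := by
    rw [hrdef, Real.tanh_eq_sinh_div_cosh]
    exact (div_lt_one hch).mpr hcs
  have hz1 : ‖z‖ < 1 := lt_of_le_of_lt hz hr1
  have hzball : z ∈ ball (0:ℂ) 1 := mem_ball_zero_iff.mpr hz1
  -- the rotation λ
  set t : ℝ := (Complex.arg (g z) - Complex.arg (h z)) / 2 with htdef
  set lam : ℂ := Complex.exp (t * Complex.I) with hlamdef
  have hlamabs : ‖lam‖ = 1 := Complex.norm_exp_ofReal_mul_I t
  have hconjlam : (starRingEnd ℂ) lam = Complex.exp ((-t : ℝ) * Complex.I) := by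
    rw [hlamdef, ← Complex.exp_conj]
    congr 1
    simp [Complex.conj_ofReal]
  -- the analytic function F
  set F : ℂ → ℂ := fun w => lam * h w + (starRingEnd ℂ) lam * g w with hFdef
  have hF0 : F 0 = 0 := by simp [hFdef, hh0, hg0]
  have hFdiff : DifferentiableOn ℂ F (ball (0:ℂ) 1) := by
    intro w hw
    exact (((hh w hw).differentiableAt.const_mul lam).add
      ((hg w hw).differentiableAt.const_mul _)).differentiableWithinAt
  have hFre : ∀ w ∈ ball (0:ℂ) 1, |(F w).re| < 1 := by
    intro w hw
    have key : (F w).re = (lam * (h w + (starRingEnd ℂ) (g w))).re := by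
      have h2 : ((starRingEnd ℂ) lam * g w).re
          = (lam * (starRingEnd ℂ) (g w)).re := by
        calc ((starRingEnd ℂ) lam * g w).re
            = ((starRingEnd ℂ) (lam * (starRingEnd ℂ) (g w))).re := by
              rw [map_mul, Complex.conj_conj]
          _ = (lam * (starRingEnd ℂ) (g w)).re := Complex.conj_re _
      simp only [hFdef, mul_add, Complex.add_re]
      rw [h2]
    rw [key]
    calc |(lam * (h w + (starRingEnd ℂ) (g w))).re|
        ≤ ‖lam * (h w + (starRingEnd ℂ) (g w))‖ := Complex.abs_re_le_norm _
      _ = ‖h w + (starRingEnd ℂ) (g w)‖ := by rw [norm_mul, hlamabs, one_mul]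
      _ < 1 := hbound w (mem_ball_zero_iff.mp hw)
  -- the exponential map to the right half plane
  set E : ℂ → ℂ := fun w => Complex.exp (((π/2 : ℝ) : ℂ) * Complex.I * F w) with hEdef
  have hvre : ∀ ζ : ℂ, (((π/2 : ℝ) : ℂ) * Complex.I * ζ).re = -(π/2) * ζ.im := by
    intro ζ
    simp only [Complex.mul_re, Complex.mul_im, Complex.I_re, Complex.I_im,
      Complex.ofReal_re, Complex.ofReal_im]
    ring
  have hvim : ∀ ζ : ℂ, (((π/2 : ℝ) : ℂ) * Complex.I * ζ).im = (π/2) * ζ.re := by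
    intro ζ
    simp only [Complex.mul_re, Complex.mul_im, Complex.I_re, Complex.I_im,
      Complex.ofReal_re, Complex.ofReal_im]
    ring
  have hEre : ∀ w ∈ ball (0:ℂ) 1, 0 < (E w).re := by
    intro w hw
    rw [hEdef]
    simp only [Complex.exp_re, hvre, hvim]
    apply mul_pos (Real.exp_pos _)
    apply Real.cos_pos_of_mem_Ioo
    constructor
    · have := (abs_lt.mp (hFre w hw)).1; nlinarith [Real.pi_pos]
    · have := (abs_lt.mp (hFre w hw)).2; nlinarith [Real.pi_pos]
  have hEdiff : DifferentiableOn ℂ E (ball (0:ℂ) 1) :=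
    ((hFdiff.const_mul _).cexp)
  have hEne : ∀ w ∈ ball (0:ℂ) 1, E w + 1 ≠ 0 := by
    intro w hw h0
    have := congrArg Complex.re h0
    simp only [Complex.add_re, Complex.one_re, Complex.zero_re] at this
    linarith [hEre w hw]
  -- the composed map G to the disk
  set G : ℂ → ℂ := fun w => (E w - 1) / (E w + 1) with hGdef
  have hGdiff : DifferentiableOn ℂ G (ball (0:ℂ) 1) :=
    DifferentiableOn.div (hEdiff.sub_const 1) (hEdiff.add_const 1) hEne
  have hGmaps : Set.MapsTo G (ball (0:ℂ) 1) (ball (0:ℂ) 1) := by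
    intro w hw
    rw [mem_ball_zero_iff]
    have hre := hEre w hw
    have habs : ‖E w - 1‖ < ‖E w + 1‖ := by
      rw [Complex.norm_def, Complex.norm_def]
      apply Real.sqrt_lt_sqrt (Complex.normSq_nonneg _)
      simp only [Complex.normSq_apply, Complex.sub_re, Complex.sub_im, Complex.add_re,
        Complex.add_im, Complex.one_re, Complex.one_im]
      nlinarith
    rw [hGdef]
    simp only [norm_div]
    rw [div_lt_one (lt_of_le_of_lt (norm_nonneg _) habs)]
    exact habs
  have hG0 : G 0 = 0 := by
    simp [hGdef, hEdef, hF0]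
  -- Schwarz lemma
  have hschwarz : ‖G z‖ ≤ ‖z‖ :=
    Complex.norm_le_norm_of_mapsTo_ball hGdiff (hGmaps.mono_right ball_subset_closedBall) hG0 hz1
  have hGz : ‖G z‖ ≤ r := le_trans hschwarz hz
  -- unwind the Schwarz bound
  set zeta : ℂ := F z with hzeta
  set X : ℝ := (π/2) * zeta.re with hXdef
  set Y : ℝ := -(π/2) * zeta.im with hYdef
  have hure : (E z).re = Real.exp Y * Real.cos X := by
    rw [hEdef]
    simp only [Complex.exp_re]
    rw [hvre, hvim]
  have huim : (E z).im = Real.exp Y * Real.sin X := by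
    rw [hEdef]
    simp only [Complex.exp_im]
    rw [hvre, hvim]
  clear_value zeta X Y
  have habs2 : ‖E z - 1‖ ≤ r * ‖E z + 1‖ := by
    have h5 : ‖G z‖ = ‖E z - 1‖ / ‖E z + 1‖ := by
      rw [hGdef]; simp [norm_div]
    rw [h5] at hGz
    have hpos : 0 < ‖E z + 1‖ := norm_pos_iff.mpr (hEne z hzball)
    exact (div_le_iff₀ hpos).mp hGz
  have hsq : ((E z).re - 1)^2 + (E z).im^2 ≤ r^2 * (((E z).re + 1)^2 + (E z).im^2) := by
    have h6 : (‖E z - 1‖)^2 ≤ (r * ‖E z + 1‖)^2 :=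
      pow_le_pow_left₀ (norm_nonneg _) habs2 2
    rw [mul_pow, Complex.sq_norm, Complex.sq_norm] at h6
    simp only [Complex.normSq_apply, Complex.sub_re, Complex.sub_im, Complex.add_re,
      Complex.add_im, Complex.one_re, Complex.one_im] at h6
    calc ((E z).re - 1)^2 + (E z).im^2
        = ((E z).re - 1) * ((E z).re - 1) + ((E z).im - 0) * ((E z).im - 0) := by ring
      _ ≤ r^2 * (((E z).re + 1) * ((E z).re + 1) + ((E z).im + 0) * ((E z).im + 0)) := h6
      _ = r^2 * (((E z).re + 1)^2 + (E z).im^2) := by ring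
  -- translate into the cosh/cos inequality
  have hc : (1 - r^2) * Real.cosh (π/2) = 1 + r^2 := by
    have h2m : Real.cosh (π/2) = Real.cosh (π/4)^2 + Real.sinh (π/4)^2 := by
      rw [show (π/2 : ℝ) = 2 * (π/4) by ring, Real.cosh_two_mul]
    have hchsq : Real.cosh (π/4)^2 = Real.sinh (π/4)^2 + 1 := Real.cosh_sq _
    rw [hrdef, Real.tanh_eq_sinh_div_cosh, h2m]
    have hchne : Real.cosh (π/4) ≠ 0 := (Real.cosh_pos _).ne'
    field_simp
    linarith [hchsq]
  have hr2 : 0 < 1 - r^2 := by nlinarith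
  have hApos : 0 < Real.exp Y := Real.exp_pos Y
  have hcoshcos : Real.cosh Y ≤ Real.cosh (π/2) * Real.cos X := by
    rw [hure, huim] at hsq
    have hsc : Real.sin X ^ 2 + Real.cos X ^ 2 = 1 := Real.sin_sq_add_cos_sq X
    have ee1 : (Real.exp Y * Real.cos X - 1)^2 + (Real.exp Y * Real.sin X)^2
        = Real.exp Y^2 * (Real.sin X^2 + Real.cos X^2) - 2*(Real.exp Y * Real.cos X) + 1 := by
      ring
    have ee2 : (Real.exp Y * Real.cos X + 1)^2 + (Real.exp Y * Real.sin X)^2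
        = Real.exp Y^2 * (Real.sin X^2 + Real.cos X^2) + 2*(Real.exp Y * Real.cos X) + 1 := by
      ring
    rw [ee1, ee2, hsc, mul_one] at hsq
    have h7 : (1 - r^2) * (Real.exp Y^2 + 1) ≤ 2*(1+r^2) * (Real.exp Y * Real.cos X) := by
      nlinarith [hsq]
    have h8 : Real.exp Y^2 + 1 ≤ 2 * Real.cosh (π/2) * (Real.exp Y * Real.cos X) := by
      have hstep : (1 - r^2) * (Real.exp Y^2 + 1)
          ≤ (1 - r^2) * (2 * Real.cosh (π/2) * (Real.exp Y * Real.cos X)) := by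
        calc (1 - r^2) * (Real.exp Y^2 + 1)
            ≤ 2*(1+r^2) * (Real.exp Y * Real.cos X) := h7
          _ = (1 - r^2) * (2 * Real.cosh (π/2) * (Real.exp Y * Real.cos X)) := by
              rw [← hc]; ring
      exact le_of_mul_le_mul_left hstep hr2
    have h9 : 2 * (Real.cosh Y * Real.exp Y) = Real.exp Y^2 + 1 := by
      rw [Real.cosh_eq, Real.exp_neg]
      field_simp
    have h9' : Real.cosh Y * (2*Real.exp Y) = Real.exp Y^2 + 1 := by
      linear_combination h9
    have h10 : Real.cosh Y * (2*Real.exp Y) ≤ (Real.cosh (π/2) * Real.cos X) * (2*Real.exp Y) := by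
      rw [h9']
      calc Real.exp Y^2 + 1 ≤ 2 * Real.cosh (π/2) * (Real.exp Y * Real.cos X) := h8
        _ = (Real.cosh (π/2) * Real.cos X) * (2*Real.exp Y) := by ring
    exact le_of_mul_le_mul_right h10 (by positivity)
  have hXlt : |X| < π/2 := by
    have hre1 : |zeta.re| < 1 := by rw [hzeta]; exact hFre z hzball
    rw [hXdef, abs_mul, _root_.abs_of_nonneg (by positivity : (0:ℝ) ≤ π/2)]
    calc π/2 * |zeta.re| < π/2 * 1 :=
          mul_lt_mul_of_pos_left hre1 (by positivity)
      _ = π/2 := mul_one _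
  have hXY : X^2 + Y^2 ≤ (π/2)^2 := lemB hXlt hcoshcos
  have hzeta1 : ‖zeta‖ ≤ 1 := by
    have e1 : X^2 + Y^2 = (π/2)^2 * (zeta.re^2 + zeta.im^2) := by
      rw [hXdef, hYdef]; ring
    have e2 : zeta.re^2 + zeta.im^2 ≤ 1 := by
      rw [e1] at hXY
      have hp2 : (0:ℝ) < (π/2)^2 := by positivity
      nlinarith [hXY, hp2]
    have e3 : Complex.normSq zeta = zeta.re^2 + zeta.im^2 := by
      rw [Complex.normSq_apply]; ring
    nlinarith [Complex.sq_norm zeta, norm_nonneg zeta, e3]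
  -- alignment: ‖h z‖ + ‖g z‖ = |F z|
  have e1 : lam * h z = (‖h z‖ : ℂ) *
      Complex.exp ((((Complex.arg (h z) + Complex.arg (g z))/2 : ℝ)) * Complex.I) := by
    conv_lhs => rw [← Complex.norm_mul_exp_arg_mul_I (h z)]
    rw [hlamdef, mul_left_comm]
    congr 1
    rw [← Complex.exp_add]
    congr 1
    rw [htdef]
    push_cast
    ring
  have e2 : (starRingEnd ℂ) lam * g z = (‖g z‖ : ℂ) *
      Complex.exp ((((Complex.arg (h z) + Complex.arg (g z))/2 : ℝ)) * Complex.I) := by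
    conv_lhs => rw [← Complex.norm_mul_exp_arg_mul_I (g z)]
    rw [hconjlam, mul_left_comm]
    congr 1
    rw [← Complex.exp_add]
    congr 1
    rw [htdef]
    push_cast
    ring
  have halign : ‖h z‖ + ‖g z‖ = ‖zeta‖ := by
    rw [hzeta]
    show ‖h z‖ + ‖g z‖ = ‖lam * h z + (starRingEnd ℂ) lam * g z‖
    rw [e1, e2, ← add_mul, norm_mul, Complex.norm_exp_ofReal_mul_I, mul_one]
    have : ((‖h z‖ : ℂ) + (‖g z‖ : ℂ))
        = ((‖h z‖ + ‖g z‖ : ℝ) : ℂ) := by push_cast; ring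
    rw [this, Complex.norm_real, Real.norm_eq_abs,
      _root_.abs_of_nonneg (by positivity : (0:ℝ) ≤ ‖h z‖ + ‖g z‖)]
  rw [halign]
  exact hzeta1
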